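/- arXiv:1205.3694 — 5 statements merged into one kernel-verified Lean document; each statement's English description precedes it below -/
import Mathlib

section
/- Let μ : R → K be a K-valued measure on a covering ring R on a set X. If {B_n}_{n∈ℕ} is a sequence of pairwise disjoint members of R whose union B = ⋃_{n∈ℕ} B_n also belongs to R, then the series Σ_{n∈ℕ} μ(B_n) converges in K and its sum equals μ(B). -/
open scoped Classical

/-- A covering ring of subsets of `X`: it covers `X` and is closed under
intersections, unions and differences. -/
def IsCoveringRing {X : Type*} (R : Set (Set X)) : Prop :=
  (∀ x : X, ∃ A ∈ R, x ∈ A) ∧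
    ∀ A ∈ R, ∀ B ∈ R, A ∩ B ∈ R ∧ A ∪ B ∈ R ∧ A \ B ∈ R

/-- `R` is separating: distinct points can be separated by a member of `R`. -/
def Separating {X : Type*} (R : Set (Set X)) : Prop :=
  ∀ x y : X, x ≠ y → ∃ A ∈ R, x ∈ A ∧ y ∉ A

/-- A shrinking collection: the intersection of any two members contains a member. -/
def Shrinking {X : Type*} (𝒜 : Set (Set X)) : Prop :=
  ∀ A ∈ 𝒜, ∀ B ∈ 𝒜, ∃ C ∈ 𝒜, C ⊆ A ∩ B

/-- A `K`-valued measure on a covering ring `R`: additive, bounded and continuous. -/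
structure IsKMeasure {X : Type*} {K : Type*} [NormedField K]
    (R : Set (Set X)) (μ : Set X → K) : Prop where
  additive : ∀ A ∈ R, ∀ B ∈ R, Disjoint A B → μ (A ∪ B) = μ A + μ B
  bounded : ∀ A ∈ R, ∃ M : ℝ, ∀ B ∈ R, B ⊆ A → ‖μ B‖ ≤ M
  cont : ∀ 𝒜 ⊆ R, Shrinking 𝒜 → ⋂₀ 𝒜 = ∅ →
    ∀ ε : ℝ, 0 < ε → ∃ A₀ ∈ 𝒜, ∀ A ∈ 𝒜, A ⊆ A₀ → ‖μ A‖ < ε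

/-- `‖A‖_μ = sup {|μ B| : B ∈ R, B ⊆ A}`. -/
noncomputable def setNorm {X K : Type*} [NormedField K]
    (R : Set (Set X)) (μ : Set X → K) (A : Set X) : ℝ :=
  sSup {r : ℝ | ∃ B ∈ R, B ⊆ A ∧ r = ‖μ B‖}

/-- `N_μ(x) = inf {‖A‖_μ : A ∈ R, x ∈ A}`. -/
noncomputable def normFun {X K : Type*} [NormedField K]
    (R : Set (Set X)) (μ : Set X → K) (x : X) : ℝ :=
  sInf {r : ℝ | ∃ A ∈ R, x ∈ A ∧ r = setNorm R μ A}

/-- `‖f‖_μ = sup_{x ∈ X} |f x| ⬝ N_μ(x)`. -/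
noncomputable def fNorm {X K : Type*} [NormedField K]
    (R : Set (Set X)) (μ : Set X → K) (f : X → K) : ℝ :=
  sSup {r : ℝ | ∃ x : X, r = ‖f x‖ * normFun R μ x}

/-- A probability space: `R` is a covering algebra and `μ(X) = 1`. -/
def IsProbSpace {X K : Type*} [NormedField K] (R : Set (Set X)) (μ : Set X → K) : Prop :=
  IsCoveringRing R ∧ Set.univ ∈ R ∧ IsKMeasure R μ ∧ μ Set.univ = 1

/-- A measure algebra isomorphism `(R,μ) → (R',ν)`. -/
def IsMeasAlgIso {X Y K : Type*} [NormedField K] (R : Set (Set X)) (μ : Set X → K)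
    (R' : Set (Set Y)) (ν : Set Y → K) (Φ : Set X → Set Y) : Prop :=
  Set.BijOn Φ R R' ∧
    (∀ A ∈ R, ∀ B ∈ R, Φ (A ∪ B) = Φ A ∪ Φ B) ∧
    (∀ A ∈ R, Φ (Set.univ \ A) = Set.univ \ Φ A) ∧
    (∀ A ∈ R, ν (Φ A) = μ A)

/-- An invertible measure preserving transformation of `(X,R,μ)`. -/
def IsInvMPT {X K : Type*} [NormedField K] (R : Set (Set X)) (μ : Set X → K)
    (T : X → X) : Prop :=
  Function.Bijective T ∧
    (∀ A ∈ R, T '' A ∈ R) ∧ (∀ A ∈ R, T ⁻¹' A ∈ R) ∧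
    (∀ A ∈ R, μ (T '' A) = μ A) ∧ (∀ A ∈ R, μ (T ⁻¹' A) = μ A)

/-- A finite partition of `X` by pairwise disjoint nonempty members of `R`. -/
def IsFinPartition {X : Type*} (R : Set (Set X)) (α : Finset (Set X)) : Prop :=
  (∀ A ∈ α, A ∈ R) ∧ (∀ A ∈ α, A ≠ ∅) ∧
    (∀ A ∈ α, ∀ B ∈ α, A ≠ B → Disjoint A B) ∧
    ⋃₀ (α : Set (Set X)) = Set.univ

/-- The join `α ∨ β` of two partitions, discarding empty intersections. -/
noncomputable def pJoin {X : Type*} (α β : Finset (Set X)) : Finset (Set X) :=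
  (Finset.image₂ (fun A B => A ∩ B) α β).filter (fun C => C ≠ ∅)

/-- `M(α)`: the number of members of `α` of positive norm. -/
noncomputable def Mcard {X K : Type*} [NormedField K] (R : Set (Set X)) (μ : Set X → K)
    (α : Finset (Set X)) : ℕ :=
  (α.filter (fun A => 0 < setNorm R μ A)).card

/-- `H_μ(α) = (min {‖A‖_μ : A ∈ α, ‖A‖_μ > 0}) * log₂ M(α)` (and `0` if `M(α) = 0`,
since `sInf ∅ = 0` and `log₂ 0 = 0` in Mathlib). -/
noncomputable def Hent {X K : Type*} [NormedField K] (R : Set (Set X)) (μ : Set X → K)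
    (α : Finset (Set X)) : ℝ :=
  sInf {r : ℝ | ∃ A ∈ α, 0 < setNorm R μ A ∧ r = setNorm R μ A} *
    Real.logb 2 (Mcard R μ α)

/-- `joinSeq T α n = α ∨ T⁻¹α ∨ ⋯ ∨ T^{-n}α`. -/
noncomputable def joinSeq {X : Type*} (T : X → X) (α : Finset (Set X)) : ℕ → Finset (Set X)
  | 0 => α
  | n + 1 => pJoin (joinSeq T α n) (α.image (fun A => T^[n + 1] ⁻¹' A))

/-- `h_μ(T,α) = lim_{n→∞} H_μ(α ∨ T⁻¹α ∨ ⋯ ∨ T^{-(n-1)}α)/n`. -/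
noncomputable def hMeasPart {X K : Type*} [NormedField K] (R : Set (Set X)) (μ : Set X → K)
    (T : X → X) (α : Finset (Set X)) : ℝ :=
  Filter.limUnder Filter.atTop (fun n : ℕ => Hent R μ (joinSeq T α n) / (n + 1))

/-- `h_μ(T) = sup_α h_μ(T,α)` over finite partitions `α` of `X` relative to `R`. -/
noncomputable def hMeas {X K : Type*} [NormedField K] (R : Set (Set X)) (μ : Set X → K)
    (T : X → X) : ℝ :=
  sSup {r : ℝ | ∃ α : Finset (Set X), IsFinPartition R α ∧ r = hMeasPart R μ T α}

/-- The partition `α(𝒰)` associated to a finite cover `𝒰`: nonempty sets of the form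
`A₁ ∩ ⋯ ∩ A_k` where each `Aᵢ` is `Uᵢ` or `X ∖ Uᵢ`. -/
noncomputable def coverPart {X : Type*} (𝒰 : Finset (Set X)) : Finset (Set X) :=
  ((𝒰.powerset).image fun S => (⋂ U ∈ S, U) ∩ ⋂ U ∈ 𝒰 \ S, (Set.univ \ U)).filter
    (fun C => C ≠ ∅)

/-- The join `𝒰 ∨ 𝒲` of two covers. -/
noncomputable def cJoin {X : Type*} (𝒰 𝒲 : Finset (Set X)) : Finset (Set X) :=
  Finset.image₂ (fun U W => U ∩ W) 𝒰 𝒲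

/-- `N(𝒰)`: the least cardinality of a subcover of `𝒰`. -/
noncomputable def coverN {X : Type*} (𝒰 : Finset (Set X)) : ℕ :=
  sInf {n : ℕ | ∃ 𝒱 : Finset (Set X), 𝒱 ⊆ 𝒰 ∧ ⋃₀ (𝒱 : Set (Set X)) = Set.univ ∧ 𝒱.card = n}

/-- `H_top(𝒰) = log₂ N(𝒰)`. -/
noncomputable def Htop {X : Type*} (𝒰 : Finset (Set X)) : ℝ :=
  Real.logb 2 (coverN 𝒰)

/-- `cJoinSeq T 𝒰 n = 𝒰 ∨ T⁻¹𝒰 ∨ ⋯ ∨ T^{-n}𝒰`. -/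
noncomputable def cJoinSeq {X : Type*} (T : X → X) (𝒰 : Finset (Set X)) : ℕ → Finset (Set X)
  | 0 => 𝒰
  | n + 1 => cJoin (cJoinSeq T 𝒰 n) (𝒰.image (fun U => T^[n + 1] ⁻¹' U))

/-- `h_top(T,𝒰) = lim_{n→∞} H_top(𝒰 ∨ T⁻¹𝒰 ∨ ⋯ ∨ T^{-(n-1)}𝒰)/n`. -/
noncomputable def hTopCov {X : Type*} (T : X → X) (𝒰 : Finset (Set X)) : ℝ :=
  Filter.limUnder Filter.atTop (fun n : ℕ => Htop (cJoinSeq T 𝒰 n) / (n + 1))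

/-- `h_top(T) = sup_𝒰 h_top(T,𝒰)` over finite open covers `𝒰` of `X` for the
topology `t`. -/
noncomputable def hTop {X : Type*} (t : TopologicalSpace X) (T : X → X) : ℝ :=
  sSup {r : ℝ | ∃ 𝒰 : Finset (Set X), (∀ U ∈ 𝒰, t.IsOpen U) ∧
    ⋃₀ (𝒰 : Set (Set X)) = Set.univ ∧ r = hTopCov T 𝒰}

/-- For a `K`-valued measure `μ` on a covering ring `R`, if `(B n)` are
pairwise disjoint members of `R` whose union is in `R`, then `∑ μ(B n)` converges to
`μ(⋃ n, B n)`. -/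
theorem stmt0 {X K : Type*} [NontriviallyNormedField K] [CompleteSpace K]
    (hna : IsNonarchimedean (norm : K → ℝ))
    (R : Set (Set X)) (hR : IsCoveringRing R) (μ : Set X → K) (hμ : IsKMeasure R μ)
    (B : ℕ → Set X) (hB : ∀ n, B n ∈ R)
    (hdisj : ∀ m n : ℕ, m ≠ n → Disjoint (B m) (B n))
    (hU : (⋃ n, B n) ∈ R) :
    Filter.Tendsto (fun N : ℕ => ∑ n ∈ Finset.range N, μ (B n)) Filter.atTop
      (nhds (μ (⋃ n, B n))) := by
  obtain ⟨hcov, hops⟩ := hR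
  set U : Set X := ⋃ n, B n with hUdef
  have hemp : (∅ : Set X) ∈ R := by
    have := (hops (B 0) (hB 0) (B 0) (hB 0)).2.2
    simpa using this
  have hμ0 : μ ∅ = 0 := by
    have h := hμ.additive ∅ hemp ∅ hemp (by simp)
    rw [Set.union_self] at h
    exact (left_eq_add.mp h)
  -- partial unions
  set S : ℕ → Set X := fun N => ⋃ n ∈ Finset.range N, B n with hSdef
  have hSsucc : ∀ N, S (N + 1) = S N ∪ B N := by
    intro N
    simp only [hSdef, Finset.range_add_one, Finset.set_biUnion_insert]
    exact Set.union_comm _ _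
  have hS : ∀ N, S N ∈ R := by
    intro N
    induction N with
    | zero => simpa [hSdef] using hemp
    | succ n ih =>
      rw [hSsucc]
      exact (hops _ ih _ (hB n)).2.1
  have hSU : ∀ N, S N ⊆ U := by
    intro N x hx
    simp only [hSdef, Set.mem_iUnion] at hx
    obtain ⟨n, _, hn⟩ := hx
    exact Set.mem_iUnion.mpr ⟨n, hn⟩
  have hSdisj : ∀ N, Disjoint (S N) (B N) := by
    intro N
    rw [Set.disjoint_left]
    intro x hx hxB
    simp only [hSdef, Set.mem_iUnion, Finset.mem_range] at hx
    obtain ⟨n, hn, hxn⟩ := hx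
    exact (Set.disjoint_left.mp (hdisj n N hn.ne) hxn) hxB
  have hSsum : ∀ N, μ (S N) = ∑ n ∈ Finset.range N, μ (B n) := by
    intro N
    induction N with
    | zero => simpa [hSdef] using hμ0
    | succ n ih =>
      rw [hSsucc, hμ.additive _ (hS n) _ (hB n) (hSdisj n), ih,
        Finset.sum_range_succ]
  -- tails
  set T : ℕ → Set X := fun N => U \ S N with hTdef
  have hT : ∀ N, T N ∈ R := fun N => (hops U hU _ (hS N)).2.2
  have hTanti : ∀ {M N : ℕ}, M ≤ N → T N ⊆ T M := by
    intro M N hMN x hx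
    refine ⟨hx.1, fun hxS => hx.2 ?_⟩
    simp only [hSdef, Set.mem_iUnion, Finset.mem_range] at hxS ⊢
    obtain ⟨n, hn, hxn⟩ := hxS
    exact ⟨n, hn.trans_le hMN, hxn⟩
  have hμU : ∀ N, μ U = ∑ n ∈ Finset.range N, μ (B n) + μ (T N) := by
    intro N
    have hsplit : U = S N ∪ T N := (Set.union_diff_cancel (hSU N)).symm
    rw [← hSsum N, ← hμ.additive _ (hS N) _ (hT N) Set.disjoint_sdiff_right,
      ← hsplit]
  -- μ (T N) → 0 via continuity
  have hTzero : Filter.Tendsto (fun N => μ (T N)) Filter.atTop (nhds 0) := by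
    rw [NormedAddCommGroup.tendsto_nhds_zero]
    intro ε hε
    have h𝒜R : Set.range T ⊆ R := by rintro _ ⟨N, rfl⟩; exact hT N
    have hshrink : Shrinking (Set.range T) := by
      rintro _ ⟨N, rfl⟩ _ ⟨M, rfl⟩
      exact ⟨T (max N M), ⟨max N M, rfl⟩,
        Set.subset_inter (hTanti (le_max_left _ _)) (hTanti (le_max_right _ _))⟩
    have hinter : ⋂₀ Set.range T = ∅ := by
      ext x
      simp only [Set.mem_sInter, Set.mem_range, Set.mem_empty_iff_false, iff_false]
      intro h
      have hx0 : x ∈ T 0 := h _ ⟨0, rfl⟩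
      obtain ⟨n, hn⟩ := Set.mem_iUnion.mp hx0.1
      have hxn : x ∈ T (n + 1) := h _ ⟨n + 1, rfl⟩
      apply hxn.2
      simp only [hSdef, Set.mem_iUnion, Finset.mem_range]
      exact ⟨n, Nat.lt_succ_self n, hn⟩
    obtain ⟨A₀, ⟨N₀, rfl⟩, hA₀⟩ := hμ.cont _ h𝒜R hshrink hinter ε hε
    refine Filter.eventually_atTop.mpr ⟨N₀, fun N hN => ?_⟩
    exact hA₀ (T N) ⟨N, rfl⟩ (hTanti hN)
  have := (tendsto_const_nhds (x := μ U) (f := Filter.atTop (α := ℕ))).sub hTzero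
  rw [sub_zero] at this
  refine this.congr fun N => ?_
  rw [hμU N]
  ring
end

section
/- Let μ : R → K be a map on a covering ring R on a set X that is additive and bounded. Then μ is continuous if and only if the following holds: for every shrinking collection 𝒜 ⊆ R with ⋂_{A∈𝒜} A = ∅ and every ε > 0 there exists A₀ ∈ 𝒜 such that ‖A‖_μ < ε for all A ∈ 𝒜 with A ⊆ A₀. -/
open scoped Classical

/-- For an additive bounded `μ : R → K`, continuity is equivalent to the
corresponding condition for `‖·‖_μ`. -/
theorem stmt1 {X K : Type*} [NontriviallyNormedField K] [CompleteSpace K]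
    (hna : IsNonarchimedean (norm : K → ℝ))
    (R : Set (Set X)) (hR : IsCoveringRing R) (μ : Set X → K)
    (hadd : ∀ A ∈ R, ∀ B ∈ R, Disjoint A B → μ (A ∪ B) = μ A + μ B)
    (hbdd : ∀ A ∈ R, ∃ M : ℝ, ∀ B ∈ R, B ⊆ A → ‖μ B‖ ≤ M) :
    (∀ 𝒜 ⊆ R, Shrinking 𝒜 → ⋂₀ 𝒜 = ∅ →
        ∀ ε : ℝ, 0 < ε → ∃ A₀ ∈ 𝒜, ∀ A ∈ 𝒜, A ⊆ A₀ → ‖μ A‖ < ε) ↔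
      (∀ 𝒜 ⊆ R, Shrinking 𝒜 → ⋂₀ 𝒜 = ∅ →
        ∀ ε : ℝ, 0 < ε → ∃ A₀ ∈ 𝒜, ∀ A ∈ 𝒜, A ⊆ A₀ → setNorm R μ A < ε) := by
  constructor
  · -- hard direction
    intro hcont 𝒜 h𝒜R hshr hint ε hε
    have hε' : (0:ℝ) < ε / 2 := by positivity
    -- Step 1
    obtain ⟨A₁, hA₁, hstep1⟩ := hcont 𝒜 h𝒜R hshr hint (ε / 2) hε'
    -- Step 2
    set 𝒞 : Set (Set X) := {B | B ∈ R ∧ B ⊆ A₁ ∧ ∃ A' ∈ 𝒜, A' ⊆ B} with h𝒞def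
    have h𝒞R : 𝒞 ⊆ R := fun B hB => hB.1
    have h𝒞shr : Shrinking 𝒞 := by
      rintro B ⟨hBR, hBA₁, A', hA', hA'B⟩ B' ⟨hB'R, hB'A₁, A'', hA'', hA''B'⟩
      refine ⟨B ∩ B', ⟨(hR.2 B hBR B' hB'R).1, fun x hx => hBA₁ hx.1, ?_⟩, subset_rfl⟩
      obtain ⟨D, hD, hDsub⟩ := hshr A' hA' A'' hA''
      exact ⟨D, hD, fun x hx => ⟨hA'B (hDsub hx).1, hA''B' (hDsub hx).2⟩⟩
    have h𝒞int : ⋂₀ 𝒞 = ∅ := by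
      rw [Set.eq_empty_iff_forall_notMem]
      intro x hx
      have hx𝒜 : x ∈ ⋂₀ 𝒜 := by
        intro E hE
        obtain ⟨D, hD, hDsub⟩ := hshr E hE A₁ hA₁
        have hD𝒞 : D ∈ 𝒞 := ⟨h𝒜R hD, fun y hy => (hDsub hy).2, D, hD, subset_rfl⟩
        exact (hDsub (hx D hD𝒞)).1
      rw [hint] at hx𝒜; exact hx𝒜
    obtain ⟨B₀, hB₀𝒞, hstep2⟩ := hcont 𝒞 h𝒞R h𝒞shr h𝒞int (ε / 2) hε'
    obtain ⟨hB₀R, hB₀A₁, A₂, hA₂, hA₂B₀⟩ := hB₀𝒞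
    refine ⟨A₂, hA₂, fun A hA hAA₂ => ?_⟩
    have hAB₀ : A ⊆ B₀ := hAA₂.trans hA₂B₀
    have hAA₁ : A ⊆ A₁ := hAB₀.trans hB₀A₁
    have key : ∀ C ∈ R, C ⊆ A → ‖μ C‖ < ε / 2 := by
      intro C hC hCA
      -- Step 3 : traces
      set 𝒟 : Set (Set X) := {D | ∃ A'' ∈ 𝒜, A'' ⊆ A ∧ D = A'' ∩ C} with h𝒟def
      have h𝒟R : 𝒟 ⊆ R := by
        rintro D ⟨A'', hA'', hsub, rfl⟩; exact (hR.2 _ (h𝒜R hA'') _ hC).1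
      have h𝒟shr : Shrinking 𝒟 := by
        rintro D ⟨A'', hA'', hA''A, rfl⟩ D' ⟨A''', hA''', hA'''A, rfl⟩
        obtain ⟨E, hE, hEsub⟩ := hshr A'' hA'' A''' hA'''
        refine ⟨E ∩ C, ⟨E, hE, fun x hx => hA''A (hEsub hx).1, rfl⟩, ?_⟩
        intro x hx
        exact ⟨⟨(hEsub hx.1).1, hx.2⟩, ⟨(hEsub hx.1).2, hx.2⟩⟩
      have h𝒟int : ⋂₀ 𝒟 = ∅ := by
        rw [Set.eq_empty_iff_forall_notMem]
        intro x hx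
        have hx𝒜 : x ∈ ⋂₀ 𝒜 := by
          intro E hE
          obtain ⟨D, hD, hDsub⟩ := hshr E hE A hA
          have hD𝒟 : D ∩ C ∈ 𝒟 := ⟨D, hD, fun y hy => (hDsub hy).2, rfl⟩
          exact (hDsub (hx _ hD𝒟).1).1
        rw [hint] at hx𝒜; exact hx𝒜
      obtain ⟨D₀, hD₀𝒟, hstep3⟩ := hcont 𝒟 h𝒟R h𝒟shr h𝒟int (ε / 2) hε'
      obtain ⟨A₀'', hA₀'', hA₀''A, rfl⟩ := hD₀𝒟
      obtain ⟨A'', hA'', hA''sub⟩ := hshr A₀'' hA₀'' A hA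
      have hA''A : A'' ⊆ A := fun x hx => (hA''sub hx).2
      have h1 : ‖μ (A'' ∩ C)‖ < ε / 2 := by
        refine hstep3 (A'' ∩ C) ⟨A'', hA'', hA''A, rfl⟩ ?_
        exact fun x hx => ⟨(hA''sub hx.1).1, hx.2⟩
      have h2 : ‖μ A''‖ < ε / 2 := hstep1 A'' hA'' (hA''A.trans hAA₁)
      have haddA'' : μ A'' = μ (A'' ∩ C) + μ (A'' \ C) := by
        have := hadd (A'' ∩ C) (hR.2 _ (h𝒜R hA'') _ hC).1 (A'' \ C)
          (hR.2 _ (h𝒜R hA'') _ hC).2.2 (Set.disjoint_sdiff_right.mono_left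
            Set.inter_subset_right)
        rw [Set.inter_union_diff] at this
        exact this
      have h3 : ‖μ (A'' \ C)‖ < ε / 2 := by
        have heq : μ (A'' \ C) = μ A'' + -μ (A'' ∩ C) := by rw [haddA'']; ring
        calc ‖μ (A'' \ C)‖ = ‖μ A'' + -μ (A'' ∩ C)‖ := by rw [heq]
          _ ≤ max ‖μ A''‖ ‖-μ (A'' ∩ C)‖ := hna _ _
          _ < ε / 2 := by rw [norm_neg]; exact max_lt h2 h1
      have hCunion : C ∪ A'' ∈ R := (hR.2 C hC A'' (h𝒜R hA'')).2.1
      have h4 : ‖μ (C ∪ A'')‖ < ε / 2 := by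
        refine hstep2 (C ∪ A'') ⟨hCunion, ?_, A'', hA'', Set.subset_union_right⟩ ?_
        · exact Set.union_subset (hCA.trans hAA₁) (hA''A.trans hAA₁)
        · exact Set.union_subset (hCA.trans hAB₀) (hA''A.trans hAB₀)
      have haddC : μ (C ∪ A'') = μ C + μ (A'' \ C) := by
        have := hadd C hC (A'' \ C) (hR.2 _ (h𝒜R hA'') _ hC).2.2
          Set.disjoint_sdiff_right
        rw [Set.union_diff_self] at this
        exact this
      have heqC : μ C = μ (C ∪ A'') + -μ (A'' \ C) := by rw [haddC]; ring
      calc ‖μ C‖ = ‖μ (C ∪ A'') + -μ (A'' \ C)‖ := by rw [heqC]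
        _ ≤ max ‖μ (C ∪ A'')‖ ‖-μ (A'' \ C)‖ := hna _ _
        _ < ε / 2 := by rw [norm_neg]; exact max_lt h4 h3
    have hsn : setNorm R μ A ≤ ε / 2 := by
      refine Real.sSup_le ?_ (le_of_lt hε')
      rintro r ⟨B, hB, hBA, rfl⟩
      exact le_of_lt (key B hB hBA)
    linarith
  · -- easy direction
    intro h 𝒜 h𝒜R hshr hint ε hε
    obtain ⟨A₀, hA₀, hA₀p⟩ := h 𝒜 h𝒜R hshr hint ε hε
    refine ⟨A₀, hA₀, fun A hA hAA₀ => lt_of_le_of_lt ?_ (hA₀p A hA hAA₀)⟩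
    obtain ⟨M, hM⟩ := hbdd A (h𝒜R hA)
    refine le_csSup ⟨M, ?_⟩ ⟨A, h𝒜R hA, subset_rfl, rfl⟩
    rintro r ⟨B, hB, hBA, rfl⟩
    exact hM B hB hBA
end

section
/- Let μ : R → K be a K-valued measure on a covering ring R on a set X. Then for every B ∈ R, sup{N_μ(x) : x ∈ B} = ‖B‖_μ, where the supremum over the empty set is taken to be 0. Equivalently, the indicator function χ_B satisfies sup_{x∈X} |χ_B(x)|·N_μ(x) = ‖B‖_μ. -/
open scoped Classical

section Aux

variable {X K : Type*} [NormedField K] {R : Set (Set X)} {μ : Set X → K}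

lemma aux_empty_mem (hR : IsCoveringRing R) {B : Set X} (hB : B ∈ R) : (∅ : Set X) ∈ R := by
  have h := (hR.2 B hB B hB).2.2
  simpa using h

lemma aux_mu_empty (hR : IsCoveringRing R) (hμ : IsKMeasure R μ) {B : Set X} (hB : B ∈ R) :
    μ ∅ = 0 := by
  have h0 := aux_empty_mem hR hB
  have h := hμ.additive ∅ h0 ∅ h0 disjoint_bot_left
  rw [Set.union_self] at h
  exact (left_eq_add.mp h)

lemma aux_bddAbove (hμ : IsKMeasure R μ) {A : Set X} (hA : A ∈ R) :
    BddAbove {r : ℝ | ∃ B ∈ R, B ⊆ A ∧ r = ‖μ B‖} := by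
  obtain ⟨M, hM⟩ := hμ.bounded A hA
  exact ⟨M, by rintro r ⟨B, hB, hBA, rfl⟩; exact hM B hB hBA⟩

lemma aux_norm_le_setNorm (hμ : IsKMeasure R μ) {A C : Set X} (hA : A ∈ R) (hC : C ∈ R)
    (hCA : C ⊆ A) : ‖μ C‖ ≤ setNorm R μ A :=
  le_csSup (aux_bddAbove hμ hA) ⟨C, hC, hCA, rfl⟩

lemma aux_setNorm_nonneg (hR : IsCoveringRing R) (hμ : IsKMeasure R μ) {A : Set X}
    (hA : A ∈ R) : 0 ≤ setNorm R μ A := by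
  have h0 : (0 : ℝ) ∈ {r : ℝ | ∃ B ∈ R, B ⊆ A ∧ r = ‖μ B‖} :=
    ⟨∅, aux_empty_mem hR hA, Set.empty_subset A, by rw [aux_mu_empty hR hμ hA, norm_zero]⟩
  exact le_csSup (aux_bddAbove hμ hA) h0

lemma aux_setNorm_empty (hR : IsCoveringRing R) (hμ : IsKMeasure R μ) {B : Set X}
    (hB : B ∈ R) : setNorm R μ (∅ : Set X) = 0 := by
  have hset : {r : ℝ | ∃ C ∈ R, C ⊆ (∅ : Set X) ∧ r = ‖μ C‖} = {0} := by
    ext r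
    constructor
    · rintro ⟨C, hC, hC0, rfl⟩
      have : C = ∅ := Set.subset_empty_iff.mp hC0
      simp [this, aux_mu_empty hR hμ hB]
    · rintro hr
      rw [Set.mem_singleton_iff] at hr
      subst hr
      exact ⟨∅, aux_empty_mem hR hB, subset_rfl, by rw [aux_mu_empty hR hμ hB, norm_zero]⟩
  rw [setNorm, hset, csSup_singleton]

lemma aux_normFun_le (hR : IsCoveringRing R) (hμ : IsKMeasure R μ) {A : Set X} {x : X}
    (hA : A ∈ R) (hx : x ∈ A) : normFun R μ x ≤ setNorm R μ A := by
  apply csInf_le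
  · exact ⟨0, by rintro r ⟨C, hC, hxC, rfl⟩; exact aux_setNorm_nonneg hR hμ hC⟩
  · exact ⟨A, hA, hx, rfl⟩

lemma aux_normFun_nonneg (hR : IsCoveringRing R) (hμ : IsKMeasure R μ) (x : X) :
    0 ≤ normFun R μ x := by
  obtain ⟨A, hA, hx⟩ := hR.1 x
  refine le_csInf ⟨setNorm R μ A, A, hA, hx, rfl⟩ ?_
  rintro r ⟨C, hC, hxC, rfl⟩
  exact aux_setNorm_nonneg hR hμ hC

end Aux

/-- For every `B ∈ R`, `sup {N_μ(x) : x ∈ B} = ‖B‖_μ` (the supremum over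
the empty set being `0`, which is `sSup ∅` in `ℝ`); equivalently
`‖χ_B‖_μ = ‖B‖_μ`. -/
theorem stmt2 {X K : Type*} [NontriviallyNormedField K] [CompleteSpace K]
    (hna : IsNonarchimedean (norm : K → ℝ))
    (R : Set (Set X)) (hR : IsCoveringRing R) (μ : Set X → K) (hμ : IsKMeasure R μ) :
    ∀ B ∈ R, sSup {r : ℝ | ∃ x ∈ B, r = normFun R μ x} = setNorm R μ B := by
  intro B hB
  have hRempty : (∅ : Set X) ∈ R := aux_empty_mem hR hB
  have hmuempty : μ ∅ = 0 := aux_mu_empty hR hμ hB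
  by_cases hBne : B.Nonempty
  · set S := {r : ℝ | ∃ x ∈ B, r = normFun R μ x} with hS
    obtain ⟨x₀, hx₀⟩ := hBne
    have hSne : S.Nonempty := ⟨normFun R μ x₀, x₀, hx₀, rfl⟩
    have hSbdd : BddAbove S := by
      refine ⟨setNorm R μ B, ?_⟩
      rintro r ⟨x, hx, rfl⟩
      exact aux_normFun_le hR hμ hB hx
    set s := sSup S with hsdef
    have hs0 : 0 ≤ s :=
      le_trans (aux_normFun_nonneg hR hμ x₀) (le_csSup hSbdd ⟨x₀, hx₀, rfl⟩)
    apply le_antisymm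
    · apply csSup_le hSne
      rintro r ⟨x, hx, rfl⟩
      exact aux_normFun_le hR hμ hB hx
    · apply Real.sSup_le ?_ hs0
      rintro r ⟨C, hC, hCB, rfl⟩
      apply le_of_forall_pos_le_add
      intro ε hε
      -- choose for each point a small-norm set
      have hAex : ∀ x : X, ∃ A, A ∈ R ∧ setNorm R μ A < s + ε ∧ (x ∈ C → x ∈ A) := by
        intro x
        by_cases hx : x ∈ C
        · have hNx : normFun R μ x ≤ s := le_csSup hSbdd ⟨x, hCB hx, rfl⟩
          have hlt : sInf {r : ℝ | ∃ A ∈ R, x ∈ A ∧ r = setNorm R μ A} < s + ε := by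
            have : normFun R μ x < s + ε := lt_of_le_of_lt hNx (by linarith)
            simpa [normFun] using this
          obtain ⟨A', hA', hx'⟩ := hR.1 x
          obtain ⟨r, hrmem, hr⟩ :=
            exists_lt_of_csInf_lt (s := {r : ℝ | ∃ A ∈ R, x ∈ A ∧ r = setNorm R μ A})
              ⟨setNorm R μ A', A', hA', hx', rfl⟩ hlt
          obtain ⟨A, hA, hxA, rfl⟩ := hrmem
          exact ⟨A, hA, hr, fun _ => hxA⟩
        · refine ⟨∅, hRempty, ?_, fun h => absurd h hx⟩
          rw [aux_setNorm_empty hR hμ hB]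
          linarith
      choose A hAR hAlt hAC using hAex
      -- the shrinking family
      have hfR : ∀ F : Finset X, (C \ ⋃ x ∈ F, A x) ∈ R := by
        intro F
        induction F using Finset.induction_on with
        | empty => simpa using hC
        | @insert a F ha ih =>
          have heq : C \ ⋃ x ∈ insert a F, A x = (C \ ⋃ x ∈ F, A x) \ A a := by
            ext y
            simp only [Set.mem_diff, Set.mem_iUnion, Finset.mem_insert, exists_prop]
            aesop
          rw [heq]
          exact (hR.2 _ ih _ (hAR a)).2.2
      set 𝒜 : Set (Set X) := Set.range (fun F : Finset X => C \ ⋃ x ∈ F, A x) with h𝒜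
      have h𝒜R : 𝒜 ⊆ R := by rintro _ ⟨F, rfl⟩; exact hfR F
      have h𝒜sh : Shrinking 𝒜 := by
        rintro _ ⟨F, rfl⟩ _ ⟨G, rfl⟩
        refine ⟨C \ ⋃ x ∈ F ∪ G, A x, ⟨F ∪ G, rfl⟩, ?_⟩
        intro y hy
        simp only [Set.mem_inter_iff, Set.mem_diff, Set.mem_iUnion, Finset.mem_union,
          exists_prop] at hy ⊢
        aesop
      have h𝒜int : ⋂₀ 𝒜 = ∅ := by
        apply Set.eq_empty_iff_forall_notMem.mpr
        intro y hy
        rw [Set.mem_sInter] at hy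
        have hyC : y ∈ C := by
          have h0 := hy _ ⟨(∅ : Finset X), rfl⟩
          simpa using h0
        have h1 := hy _ ⟨({y} : Finset X), rfl⟩
        exact h1.2 (Set.mem_iUnion₂.mpr ⟨y, Finset.mem_singleton_self y, hAC y hyC⟩)
      obtain ⟨A₀, hA₀mem, hA₀⟩ := hμ.cont 𝒜 h𝒜R h𝒜sh h𝒜int ε hε
      obtain ⟨F, rfl⟩ := hA₀mem
      have hsmall : ‖μ (C \ ⋃ x ∈ F, A x)‖ < ε := hA₀ _ ⟨F, rfl⟩ subset_rfl
      -- union bound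
      have hub : ∀ G : Finset X, ∀ T, T ∈ R → T ⊆ (⋃ x ∈ G, A x) → ‖μ T‖ ≤ s + ε := by
        intro G
        induction G using Finset.induction_on with
        | empty =>
          intro T hT hsub
          have hT0 : T = ∅ := by
            apply Set.subset_empty_iff.mp
            simpa using hsub
          rw [hT0, hmuempty, norm_zero]
          linarith
        | @insert a G ha ih =>
          intro T hT hsub
          have h1 : T ∩ A a ∈ R := (hR.2 T hT _ (hAR a)).1
          have h2 : T \ A a ∈ R := (hR.2 T hT _ (hAR a)).2.2
          have hdis : Disjoint (T ∩ A a) (T \ A a) :=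
            Set.disjoint_left.mpr (fun y hy hy' => hy'.2 hy.2)
          have hadd := hμ.additive _ h1 _ h2 hdis
          rw [Set.inter_union_diff] at hadd
          have hb1 : ‖μ (T ∩ A a)‖ ≤ s + ε :=
            le_of_lt (lt_of_le_of_lt
              (aux_norm_le_setNorm hμ (hAR a) h1 Set.inter_subset_right) (hAlt a))
          have hsub2 : T \ A a ⊆ ⋃ x ∈ G, A x := by
            intro y hy
            have := hsub hy.1
            simp only [Set.mem_iUnion, Finset.mem_insert, exists_prop] at this ⊢
            obtain ⟨x, hx | hx, hyx⟩ := this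
            · exact absurd (hx ▸ hyx) hy.2
            · exact ⟨x, hx, hyx⟩
          have hb2 : ‖μ (T \ A a)‖ ≤ s + ε := ih _ h2 hsub2
          calc ‖μ T‖ = ‖μ (T ∩ A a) + μ (T \ A a)‖ := by rw [hadd]
            _ ≤ max ‖μ (T ∩ A a)‖ ‖μ (T \ A a)‖ := hna _ _
            _ ≤ s + ε := max_le hb1 hb2
      -- assemble
      set U : Set X := ⋃ x ∈ F, A x with hU
      have hCdU : C \ U ∈ R := hfR F
      have hCU : C ∩ U ∈ R := by
        have heq : C ∩ U = C \ (C \ U) := by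
          ext y
          simp only [Set.mem_inter_iff, Set.mem_diff]
          tauto
        rw [heq]
        exact (hR.2 _ hC _ hCdU).2.2
      have hdis : Disjoint (C ∩ U) (C \ U) :=
        Set.disjoint_left.mpr (fun y hy hy' => hy'.2 hy.2)
      have hadd := hμ.additive _ hCU _ hCdU hdis
      rw [Set.inter_union_diff] at hadd
      have hb1 : ‖μ (C ∩ U)‖ ≤ s + ε := hub F _ hCU Set.inter_subset_right
      calc ‖μ C‖ = ‖μ (C ∩ U) + μ (C \ U)‖ := by rw [hadd]
        _ ≤ max ‖μ (C ∩ U)‖ ‖μ (C \ U)‖ := hna _ _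
        _ ≤ s + ε := max_le hb1 (le_of_lt (lt_of_lt_of_le hsmall (by linarith)))
  · have hBe : B = ∅ := Set.not_nonempty_iff_eq_empty.mp hBne
    subst hBe
    have hempty : {r : ℝ | ∃ x ∈ (∅ : Set X), r = normFun R μ x} = ∅ := by simp
    rw [hempty, Real.sSup_empty, aux_setNorm_empty hR hμ hB]
end

section
/- Let μ : R → K be a K-valued measure on a covering ring R on a set X. For every A ∈ R the following are equivalent: (1) A is negligible, i.e. N_μ(x) = 0 for every x ∈ A; (2) ‖A‖_μ = 0; (3) μ(A∩B) = μ(A) for every B ∈ R. -/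
open scoped Classical

/-- For `A ∈ R`, the following are equivalent: `A` is negligible
(`N_μ = 0` on `A`), `‖A‖_μ = 0`, and `μ(A ∩ B) = μ(A)` for all `B ∈ R`. -/
theorem stmt3 {X K : Type*} [NontriviallyNormedField K] [CompleteSpace K]
    (hna : IsNonarchimedean (norm : K → ℝ))
    (R : Set (Set X)) (hR : IsCoveringRing R) (μ : Set X → K) (hμ : IsKMeasure R μ) :
    ∀ A ∈ R,
      List.TFAE [∀ x ∈ A, normFun R μ x = 0,
        setNorm R μ A = 0,
        ∀ B ∈ R, μ (A ∩ B) = μ A] := by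
  intro A hA
  have hempty : (∅ : Set X) ∈ R := by
    have := (hR.2 A hA A hA).2.2
    simpa using this
  have hμ0 : μ ∅ = 0 := by
    have h := hμ.additive ∅ hempty ∅ hempty (by simp)
    simp only [Set.union_empty] at h
    exact left_eq_add.mp h
  have hbdd : ∀ C ∈ R, BddAbove {r : ℝ | ∃ B ∈ R, B ⊆ C ∧ r = ‖μ B‖} := by
    intro C hC
    obtain ⟨M, hM⟩ := hμ.bounded C hC
    exact ⟨M, by rintro r ⟨B, hB, hBC, rfl⟩; exact hM B hB hBC⟩
  have hmem : ∀ C, (0:ℝ) ∈ {r : ℝ | ∃ B ∈ R, B ⊆ C ∧ r = ‖μ B‖} :=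
    fun C => ⟨∅, hempty, Set.empty_subset _, by simp [hμ0]⟩
  have hle : ∀ C ∈ R, ∀ B ∈ R, B ⊆ C → ‖μ B‖ ≤ setNorm R μ C := by
    intro C hC B hB hBC
    exact le_csSup (hbdd C hC) ⟨B, hB, hBC, rfl⟩
  have hnn : ∀ C ∈ R, 0 ≤ setNorm R μ C := by
    intro C hC
    exact le_csSup (hbdd C hC) (hmem C)
  tfae_have 2 → 3 := by
    intro h2 B hB
    have h1 : ‖μ (A ∩ B)‖ ≤ 0 :=
      h2 ▸ hle A hA (A ∩ B) (hR.2 A hA B hB).1 Set.inter_subset_left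
    have h2' : ‖μ A‖ ≤ 0 := h2 ▸ hle A hA A hA subset_rfl
    have e1 : μ (A ∩ B) = 0 := by
      have := norm_nonneg (μ (A ∩ B)); have := norm_eq_zero.mp (le_antisymm h1 this)
      exact this
    have e2 : μ A = 0 := by
      have := norm_nonneg (μ A); exact norm_eq_zero.mp (le_antisymm h2' this)
    rw [e1, e2]
  tfae_have 3 → 2 := by
    intro h3
    have h0 : μ A = 0 := by
      have := h3 ∅ hempty
      simpa [hμ0] using this.symm
    have key : ∀ B ∈ R, B ⊆ A → μ B = 0 := by
      intro B hB hBA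
      have := h3 B hB
      rw [Set.inter_eq_right.mpr hBA] at this
      rw [this, h0]
    refine le_antisymm ?_ (hnn A hA)
    refine csSup_le ⟨0, hmem A⟩ ?_
    rintro r ⟨B, hB, hBA, rfl⟩
    simp [key B hB hBA]
  tfae_have 2 → 1 := by
    intro h2 x hx
    have hbl : BddBelow {r : ℝ | ∃ A' ∈ R, x ∈ A' ∧ r = setNorm R μ A'} :=
      ⟨0, by rintro r ⟨C, hC, _, rfl⟩; exact hnn C hC⟩
    have hub : normFun R μ x ≤ 0 := by
      have hm : setNorm R μ A ∈ {r : ℝ | ∃ A' ∈ R, x ∈ A' ∧ r = setNorm R μ A'} :=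
        ⟨A, hA, hx, rfl⟩
      calc normFun R μ x ≤ setNorm R μ A := csInf_le hbl hm
        _ = 0 := h2
    have hge : 0 ≤ normFun R μ x :=
      le_csInf ⟨_, A, hA, hx, rfl⟩ (by rintro r ⟨C, hC, _, rfl⟩; exact hnn C hC)
    linarith
  tfae_have 1 → 2 := by
    intro h1
    by_contra hne
    have hpos : 0 < setNorm R μ A := lt_of_le_of_ne (hnn A hA) (Ne.symm hne)
    obtain ⟨r, hr, hrpos⟩ : ∃ r ∈ {r : ℝ | ∃ B ∈ R, B ⊆ A ∧ r = ‖μ B‖}, 0 < r := by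
      by_contra hcon
      push_neg at hcon
      have : setNorm R μ A ≤ 0 := csSup_le ⟨0, hmem A⟩ hcon
      linarith
    obtain ⟨B, hB, hBA, rfl⟩ := hr
    set c := ‖μ B‖ with hc
    have hf : ∀ x ∈ B, ∃ A', A' ∈ R ∧ x ∈ A' ∧ setNorm R μ A' < c := by
      intro x hx
      have h0 : normFun R μ x = 0 := h1 x (hBA hx)
      have hne' : {r : ℝ | ∃ A' ∈ R, x ∈ A' ∧ r = setNorm R μ A'}.Nonempty :=
        ⟨_, B, hB, hx, rfl⟩
      have hlt : sInf {r : ℝ | ∃ A' ∈ R, x ∈ A' ∧ r = setNorm R μ A'} < c := by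
        have : normFun R μ x < c := by rw [h0]; exact hrpos
        exact this
      obtain ⟨r, ⟨A', hA', hxA', rfl⟩, hrc⟩ := exists_lt_of_csInf_lt hne' hlt
      exact ⟨A', hA', hxA', hrc⟩
    choose! f hf1 hf2 hf3 using hf
    have key : ∀ s : Finset X, ↑s ⊆ B →
        (B ∩ ⋃ x ∈ s, f x) ∈ R ∧ ‖μ (B ∩ ⋃ x ∈ s, f x)‖ < c := by
      intro s
      induction s using Finset.induction with
      | empty => intro _; exact ⟨by simpa using hempty, by simpa [hμ0] using hrpos⟩
      | @insert a s ha ih =>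
        intro hs
        have hsB : ↑s ⊆ B := by
          refine subset_trans ?_ hs
          intro y hy
          simp only [Finset.coe_insert, Set.mem_insert_iff]
          exact Or.inr hy
        have haB : a ∈ B := hs (by simp)
        obtain ⟨hUR, hUlt⟩ := ih hsB
        have hfa : f a ∈ R := hf1 a haB
        have hBfa : B ∩ f a ∈ R := (hR.2 B hB (f a) hfa).1
        have hD : ((B ∩ f a) \ (B ∩ ⋃ x ∈ s, f x)) ∈ R :=
          (hR.2 _ hBfa _ hUR).2.2
        have hEq : B ∩ ⋃ x ∈ insert a s, f x =
            (B ∩ ⋃ x ∈ s, f x) ∪ ((B ∩ f a) \ (B ∩ ⋃ x ∈ s, f x)) := by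
          ext y
          simp only [Set.mem_inter_iff, Set.mem_iUnion, Set.mem_union, Set.mem_diff,
            Finset.mem_insert, exists_prop]
          constructor
          · rintro ⟨hyB, x, hx | hx, hyf⟩
            · by_cases hU : ∃ x ∈ s, y ∈ f x
              · exact Or.inl ⟨hyB, hU⟩
              · subst hx
                exact Or.inr ⟨⟨hyB, hyf⟩, fun h => hU h.2⟩
            · exact Or.inl ⟨hyB, x, hx, hyf⟩
          · rintro (⟨hyB, x, hx, hyf⟩ | ⟨⟨hyB, hyf⟩, _⟩)
            · exact ⟨hyB, x, Or.inr hx, hyf⟩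
            · exact ⟨hyB, a, Or.inl rfl, hyf⟩
        have hdisj : Disjoint (B ∩ ⋃ x ∈ s, f x) ((B ∩ f a) \ (B ∩ ⋃ x ∈ s, f x)) :=
          Set.disjoint_sdiff_right
        refine ⟨hEq ▸ (hR.2 _ hUR _ hD).2.1, ?_⟩
        rw [hEq, hμ.additive _ hUR _ hD hdisj]
        have hsub : (B ∩ f a) \ (B ∩ ⋃ x ∈ s, f x) ⊆ f a := fun y hy => hy.1.2
        have h3 : ‖μ ((B ∩ f a) \ (B ∩ ⋃ x ∈ s, f x))‖ < c :=
          lt_of_le_of_lt (hle (f a) hfa _ hD hsub) (hf3 a haB)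
        exact lt_of_le_of_lt (hna _ _) (max_lt hUlt h3)
    set 𝒜 : Set (Set X) := {C | ∃ s : Finset X, ↑s ⊆ B ∧ C = B \ ⋃ x ∈ s, f x} with h𝒜
    have hdiff : ∀ s : Finset X, B \ ⋃ x ∈ s, f x = B \ (B ∩ ⋃ x ∈ s, f x) := by
      intro s
      ext y
      simp only [Set.mem_diff, Set.mem_inter_iff]
      tauto
    have h𝒜R : 𝒜 ⊆ R := by
      rintro C ⟨s, hs, rfl⟩
      rw [hdiff s]
      exact (hR.2 B hB _ (key s hs).1).2.2
    have hshr : Shrinking 𝒜 := by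
      rintro _ ⟨s, hs, rfl⟩ _ ⟨t, ht, rfl⟩
      refine ⟨B \ ⋃ x ∈ (s ∪ t), f x, ⟨s ∪ t, ?_, rfl⟩, ?_⟩
      · intro y hy
        simp only [Finset.coe_union, Set.mem_union] at hy
        rcases hy with hy | hy
        · exact hs hy
        · exact ht hy
      · intro y hy
        obtain ⟨hyB, hyn⟩ := hy
        simp only [Set.mem_iUnion, Finset.mem_union, exists_prop, not_exists, not_and] at hyn
        constructor <;> refine ⟨hyB, ?_⟩ <;>
          · simp only [Set.mem_iUnion, exists_prop, not_exists, not_and]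
            intro x hx
            exact hyn x (by simp [hx])
    have hinter : ⋂₀ 𝒜 = ∅ := by
      ext y
      simp only [Set.mem_sInter, Set.mem_empty_iff_false, iff_false]
      intro hy
      have hyB : y ∈ B := by
        have := hy (B \ ⋃ x ∈ (∅ : Finset X), f x) ⟨∅, by simp, rfl⟩
        simpa using this
      have := hy (B \ ⋃ x ∈ ({y} : Finset X), f x) ⟨{y}, by simpa using hyB, rfl⟩
      simp only [Finset.mem_singleton, Set.mem_diff, Set.mem_iUnion, exists_prop,
        not_exists, not_and] at this
      exact this.2 y rfl (hf2 y hyB)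
    obtain ⟨A₀, hA₀, hsmall⟩ := hμ.cont 𝒜 h𝒜R hshr hinter c hrpos
    have hA₀n : ‖μ A₀‖ < c := hsmall A₀ hA₀ subset_rfl
    have hA₀R : A₀ ∈ R := h𝒜R hA₀
    obtain ⟨s₀, hs₀, rfl⟩ := hA₀
    have hUR := (key s₀ hs₀).1
    have hBdecomp : B = (B ∩ ⋃ x ∈ s₀, f x) ∪ (B \ ⋃ x ∈ s₀, f x) := by
      ext y
      simp only [Set.mem_union, Set.mem_inter_iff, Set.mem_diff]
      tauto
    have hdisj : Disjoint (B ∩ ⋃ x ∈ s₀, f x) (B \ ⋃ x ∈ s₀, f x) := by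
      rw [Set.disjoint_left]
      rintro y ⟨_, hy2⟩ ⟨_, hy4⟩
      exact hy4 hy2
    have hsum : μ B = μ (B ∩ ⋃ x ∈ s₀, f x) + μ (B \ ⋃ x ∈ s₀, f x) := by
      conv_lhs => rw [hBdecomp]
      exact hμ.additive _ hUR _ hA₀R hdisj
    have : c < c :=
      calc c = ‖μ B‖ := hc
        _ = ‖μ (B ∩ ⋃ x ∈ s₀, f x) + μ (B \ ⋃ x ∈ s₀, f x)‖ := by rw [hsum]
        _ ≤ max ‖μ (B ∩ ⋃ x ∈ s₀, f x)‖ ‖μ (B \ ⋃ x ∈ s₀, f x)‖ := hna _ _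
        _ < c := max_lt (key s₀ hs₀).2 hA₀n
    exact lt_irrefl _ this
  tfae_finish
end

section
/- Let (X,R,μ) and (Y,R',ν) be probability spaces over K whose covering rings R and R' are separating, with X₀(μ) = ∅ and Y₀(ν) = ∅, and assume that for every x ∈ X the set X∖{x} is a union of countably many members of R, and for every y ∈ Y the set Y∖{y} is a union of countably many members of R'. Let T and S be invertible measure preserving transformations of (X,R,μ) and (Y,R',ν) respectively. Then T and S are conjugate if and only if they are isomorphic; that is: there exists a measure algebra isomorphism Φ : (R,μ) → (R',ν) with Φ(T⁻¹(A)) = S⁻¹(Φ(A)) for every A ∈ R, if and only if there exists a bijection φ : X → Y with {φ(A) : A ∈ R} = R', ν(φ(A)) = μ(A) for every A ∈ R, and φ∘T = S∘φ. -/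
open scoped Classical

section Aux
variable {X Y K : Type*} [NormedField K] {R : Set (Set X)} {μ : Set X → K}
  {R' : Set (Set Y)} {ν : Set Y → K} {Φ : Set X → Set Y}

lemma empty_mem_ring (hXp : IsProbSpace R μ) : (∅ : Set X) ∈ R := by
  have := (hXp.1.2 Set.univ hXp.2.1 Set.univ hXp.2.1).2.2
  simpa using this

lemma compl_mem_ring (hXp : IsProbSpace R μ) {A : Set X} (hA : A ∈ R) :
    Set.univ \ A ∈ R := (hXp.1.2 Set.univ hXp.2.1 A hA).2.2

lemma iso_univ (hXp : IsProbSpace R μ) (hΦ : IsMeasAlgIso R μ R' ν Φ) :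
    Φ Set.univ = Set.univ := by
  have h1 := hΦ.2.1 Set.univ hXp.2.1 (Set.univ \ Set.univ) (compl_mem_ring hXp hXp.2.1)
  have h2 := hΦ.2.2.1 Set.univ hXp.2.1
  rw [h2] at h1
  simpa using h1

lemma iso_empty (hXp : IsProbSpace R μ) (hΦ : IsMeasAlgIso R μ R' ν Φ) :
    Φ ∅ = ∅ := by
  have := hΦ.2.2.1 Set.univ hXp.2.1
  rw [iso_univ hXp hΦ] at this
  simpa using this

lemma iso_inter (hXp : IsProbSpace R μ) (hΦ : IsMeasAlgIso R μ R' ν Φ)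
    {A B : Set X} (hA : A ∈ R) (hB : B ∈ R) : Φ (A ∩ B) = Φ A ∩ Φ B := by
  have hAc := compl_mem_ring hXp hA
  have hBc := compl_mem_ring hXp hB
  have hU : (Set.univ \ A) ∪ (Set.univ \ B) ∈ R := (hXp.1.2 _ hAc _ hBc).2.1
  have key : A ∩ B = Set.univ \ ((Set.univ \ A) ∪ (Set.univ \ B)) := by
    ext x; simp
  rw [key, hΦ.2.2.1 _ hU, hΦ.2.1 _ hAc _ hBc, hΦ.2.2.1 _ hA, hΦ.2.2.1 _ hB]
  ext y; simp

lemma iso_diff (hXp : IsProbSpace R μ) (hΦ : IsMeasAlgIso R μ R' ν Φ)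
    {A B : Set X} (hA : A ∈ R) (hB : B ∈ R) : Φ (A \ B) = Φ A \ Φ B := by
  have key : A \ B = A ∩ (Set.univ \ B) := by ext x; simp
  rw [key, iso_inter hXp hΦ hA (compl_mem_ring hXp hB), hΦ.2.2.1 _ hB]
  ext y; simp

lemma iso_mono (hΦ : IsMeasAlgIso R μ R' ν Φ)
    {A B : Set X} (hA : A ∈ R) (hB : B ∈ R) (h : A ⊆ B) : Φ A ⊆ Φ B := by
  have : Φ (A ∪ B) = Φ A ∪ Φ B := hΦ.2.1 A hA B hB
  rw [Set.union_eq_self_of_subset_left h] at this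
  rw [this]; exact Set.subset_union_left

lemma setNorm_nonneg (hXp : IsProbSpace R μ) {A : Set X} (hA : A ∈ R) :
    0 ≤ setNorm R μ A := by
  obtain ⟨M, hM⟩ := hXp.2.2.1.bounded A hA
  have hbdd : BddAbove {r : ℝ | ∃ B ∈ R, B ⊆ A ∧ r = ‖μ B‖} := by
    refine ⟨M, ?_⟩
    rintro r ⟨B, hB, hBA, rfl⟩
    exact hM B hB hBA
  have : ‖μ (∅ : Set X)‖ ≤ setNorm R μ A :=
    le_csSup hbdd ⟨∅, empty_mem_ring hXp, Set.empty_subset _, rfl⟩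
  exact le_trans (norm_nonneg _) this

lemma normFun_nonneg (hXp : IsProbSpace R μ) (x : X) : 0 ≤ normFun R μ x := by
  obtain ⟨A, hA, hxA⟩ := hXp.1.1 x
  refine le_csInf ⟨_, A, hA, hxA, rfl⟩ ?_
  rintro r ⟨B, hB, hxB, rfl⟩
  exact setNorm_nonneg hXp hB

/-- Key lemma: the point associated to `x` under a measure algebra isomorphism. -/
lemma key_point (hXp : IsProbSpace R μ) (hYp : IsProbSpace R' ν)
    (hΦ : IsMeasAlgIso R μ R' ν Φ) (hsepY : Separating R')
    (x : X) (hx : normFun R μ x ≠ 0) :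
    ∃! y : Y, ∀ A ∈ R, (x ∈ A ↔ y ∈ Φ A) := by
  have hN : 0 < normFun R μ x := lt_of_le_of_ne (normFun_nonneg hXp x) (Ne.symm hx)
  set N := normFun R μ x with hNdef
  set 𝒜 : Set (Set Y) := {B' | ∃ A ∈ R, x ∈ A ∧ B' = Φ A} with h𝒜def
  have h𝒜sub : 𝒜 ⊆ R' := by
    rintro B' ⟨A, hA, _, rfl⟩
    exact hΦ.1.1 hA
  have h𝒜shr : Shrinking 𝒜 := by
    rintro B₁ ⟨A₁, hA₁, hx₁, rfl⟩ B₂ ⟨A₂, hA₂, hx₂, rfl⟩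
    refine ⟨Φ (A₁ ∩ A₂), ⟨A₁ ∩ A₂, (hXp.1.2 _ hA₁ _ hA₂).1, ⟨hx₁, hx₂⟩, rfl⟩, ?_⟩
    rw [iso_inter hXp hΦ hA₁ hA₂]
  have hne : (⋂₀ 𝒜).Nonempty := by
    rw [Set.nonempty_iff_ne_empty]
    intro hempty
    obtain ⟨A₀', hA₀'mem, hsmall⟩ :=
      hYp.2.2.1.cont 𝒜 h𝒜sub h𝒜shr hempty (N / 4) (by linarith)
    obtain ⟨A₀, hA₀R, hxA₀, rfl⟩ := hA₀'mem
    have hbound : setNorm R μ A₀ ≤ N / 2 := by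
      apply Real.sSup_le ?_ (by linarith)
      rintro r ⟨B, hBR, hBsub, rfl⟩
      by_cases hxB : x ∈ B
      · have h1 := hsmall (Φ B) ⟨B, hBR, hxB, rfl⟩ (iso_mono hΦ hBR hA₀R hBsub)
        rw [hΦ.2.2.2 B hBR] at h1
        linarith
      · have hD : A₀ \ B ∈ R := (hXp.1.2 _ hA₀R _ hBR).2.2
        have h1 := hsmall (Φ (A₀ \ B)) ⟨A₀ \ B, hD, ⟨hxA₀, hxB⟩, rfl⟩
          (iso_mono hΦ hD hA₀R Set.diff_subset)
        have h2 := hsmall (Φ A₀) ⟨A₀, hA₀R, hxA₀, rfl⟩ subset_rfl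
        rw [hΦ.2.2.2 _ hD] at h1
        rw [hΦ.2.2.2 _ hA₀R] at h2
        have hadd : μ A₀ = μ B + μ (A₀ \ B) := by
          rw [← hXp.2.2.1.additive B hBR _ hD Set.disjoint_sdiff_right,
            Set.union_diff_cancel hBsub]
        have hBeq : μ B = μ A₀ - μ (A₀ \ B) := by rw [hadd]; ring
        calc ‖μ B‖ = ‖μ A₀ - μ (A₀ \ B)‖ := by rw [hBeq]
          _ ≤ ‖μ A₀‖ + ‖μ (A₀ \ B)‖ := norm_sub_le _ _
          _ ≤ N / 2 := by linarith
    have hle : N ≤ setNorm R μ A₀ := by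
      refine csInf_le ⟨0, ?_⟩ ⟨A₀, hA₀R, hxA₀, rfl⟩
      rintro r ⟨B, hB, _, rfl⟩
      exact setNorm_nonneg hXp hB
    linarith
  obtain ⟨y, hy⟩ := hne
  refine ⟨y, ?_, ?_⟩
  · intro A hA
    constructor
    · intro hxA
      exact hy (Φ A) ⟨A, hA, hxA, rfl⟩
    · intro hyA
      by_contra hxA
      have hAc := compl_mem_ring hXp hA
      have : y ∈ Φ (Set.univ \ A) := hy _ ⟨_, hAc, ⟨trivial, hxA⟩, rfl⟩
      rw [hΦ.2.2.1 A hA] at this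
      exact this.2 hyA
  · intro z hz
    by_contra hzy
    obtain ⟨A', hA'R', hzA', hyA'⟩ := hsepY z y hzy
    obtain ⟨A, hAR, rfl⟩ := hΦ.1.2.2 hA'R'
    exact hyA' ((fun hxA => hy (Φ A) ⟨A, hAR, hxA, rfl⟩) ((hz A hAR).mpr hzA'))

/-- The inverse of a measure algebra isomorphism is one. -/
lemma inv_iso [Nonempty (Set X)] (hXp : IsProbSpace R μ) (hYp : IsProbSpace R' ν)
    (hΦ : IsMeasAlgIso R μ R' ν Φ) :
    ∃ Ψ : Set Y → Set X, IsMeasAlgIso R' ν R μ Ψ ∧ ∀ A ∈ R, Ψ (Φ A) = A := by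
  set Ψ := Function.invFunOn Φ R with hΨdef
  have hinv : ∀ A ∈ R, Ψ (Φ A) = A := fun A hA => hΦ.1.2.1.leftInvOn_invFunOn hA
  have hmem : ∀ B' ∈ R', Ψ B' ∈ R ∧ Φ (Ψ B') = B' := by
    intro B' hB'
    obtain ⟨A, hA, rfl⟩ := hΦ.1.2.2 hB'
    rw [hinv A hA]; exact ⟨hA, rfl⟩
  have hsurj : ∀ B' ∈ R', ∃ A ∈ R, Φ A = B' := fun B' hB' => hΦ.1.2.2 hB'
  refine ⟨Ψ, ⟨⟨fun B' hB' => (hmem B' hB').1, ?_, ?_⟩, ?_, ?_, ?_⟩, hinv⟩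
  · intro B₁ hB₁ B₂ hB₂ h
    rw [← (hmem B₁ hB₁).2, ← (hmem B₂ hB₂).2, h]
  · intro A hA
    exact ⟨Φ A, hΦ.1.1 hA, hinv A hA⟩
  · intro B₁ hB₁ B₂ hB₂
    obtain ⟨A₁, hA₁, rfl⟩ := hsurj B₁ hB₁
    obtain ⟨A₂, hA₂, rfl⟩ := hsurj B₂ hB₂
    rw [← hΦ.2.1 A₁ hA₁ A₂ hA₂, hinv _ hA₁, hinv _ hA₂,
      hinv _ ((hXp.1.2 _ hA₁ _ hA₂).2.1)]
  · intro B' hB'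
    obtain ⟨A, hA, rfl⟩ := hsurj B' hB'
    rw [← hΦ.2.2.1 A hA, hinv _ hA, hinv _ (compl_mem_ring hXp hA)]
  · intro B' hB'
    obtain ⟨A, hA, rfl⟩ := hsurj B' hB'
    rw [hinv _ hA, hΦ.2.2.2 A hA]

end Aux

/-- When `X₀(μ) = ∅` and `Y₀(ν) = ∅`, two invertible measure preserving
transformations are conjugate if and only if they are isomorphic. -/
theorem stmt8 {X Y K : Type*} [NontriviallyNormedField K] [CompleteSpace K]
    (hna : IsNonarchimedean (norm : K → ℝ))
    (R : Set (Set X)) (μ : Set X → K) (hXp : IsProbSpace R μ) (hsepX : Separating R)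
    (hX0 : ∀ x : X, normFun R μ x ≠ 0)
    (hcX : ∀ x : X, ∃ f : ℕ → Set X, (∀ n, f n ∈ R) ∧ (⋃ n, f n) = Set.univ \ {x})
    (R' : Set (Set Y)) (ν : Set Y → K) (hYp : IsProbSpace R' ν) (hsepY : Separating R')
    (hY0 : ∀ y : Y, normFun R' ν y ≠ 0)
    (hcY : ∀ y : Y, ∃ g : ℕ → Set Y, (∀ n, g n ∈ R') ∧ (⋃ n, g n) = Set.univ \ {y})
    (T : X → X) (hT : IsInvMPT R μ T) (S : Y → Y) (hS : IsInvMPT R' ν S) :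
    (∃ Φ : Set X → Set Y, IsMeasAlgIso R μ R' ν Φ ∧
        ∀ A ∈ R, Φ (T ⁻¹' A) = S ⁻¹' (Φ A)) ↔
      (∃ φ : X → Y, Function.Bijective φ ∧ (Set.image φ) '' R = R' ∧
        (∀ A ∈ R, ν (φ '' A) = μ A) ∧ φ ∘ T = S ∘ φ) := by
  constructor
  · rintro ⟨Φ, hΦ, hΦT⟩
    obtain ⟨Ψ, hΨ, hinv⟩ := inv_iso hXp hYp hΦ
    -- point extensionality
    have hextX : ∀ x₁ x₂ : X, (∀ A ∈ R, (x₁ ∈ A ↔ x₂ ∈ A)) → x₁ = x₂ := by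
      intro x₁ x₂ h
      by_contra hne
      obtain ⟨A, hA, h1, h2⟩ := hsepX x₁ x₂ hne
      exact h2 ((h A hA).mp h1)
    have hextY : ∀ y₁ y₂ : Y, (∀ A' ∈ R', (y₁ ∈ A' ↔ y₂ ∈ A')) → y₁ = y₂ := by
      intro y₁ y₂ h
      by_contra hne
      obtain ⟨A', hA', h1, h2⟩ := hsepY y₁ y₂ hne
      exact h2 ((h A' hA').mp h1)
    -- the point maps
    have hφ0 : ∀ x : X, ∃! y : Y, ∀ A ∈ R, (x ∈ A ↔ y ∈ Φ A) :=
      fun x => key_point hXp hYp hΦ hsepY x (hX0 x)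
    have hψ0 : ∀ y : Y, ∃! x : X, ∀ B' ∈ R', (y ∈ B' ↔ x ∈ Ψ B') :=
      fun y => key_point hYp hXp hΨ hsepX y (hY0 y)
    choose φ hφP _ using hφ0
    choose ψ hψP' _ using hψ0
    have hψP : ∀ y : Y, ∀ A ∈ R, (y ∈ Φ A ↔ ψ y ∈ A) := by
      intro y A hA
      have := hψP' y (Φ A) (hΦ.1.1 hA)
      rwa [hinv A hA] at this
    have hψφ : ∀ x, ψ (φ x) = x := by
      intro x
      refine hextX _ _ fun A hA => ?_
      rw [← hψP (φ x) A hA, ← hφP x A hA]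
    have hφψ : ∀ y, φ (ψ y) = y := by
      intro y
      refine hextY _ _ fun A' hA' => ?_
      obtain ⟨A, hA, rfl⟩ := hΦ.1.2.2 hA'
      rw [← hφP (ψ y) A hA, hψP y A hA]
    have hbij : Function.Bijective φ :=
      ⟨fun a b h => by rw [← hψφ a, h, hψφ b], fun y => ⟨ψ y, hφψ y⟩⟩
    have himg : ∀ A ∈ R, φ '' A = Φ A := by
      intro A hA
      ext y
      constructor
      · rintro ⟨x, hxA, rfl⟩
        exact (hφP x A hA).mp hxA
      · intro hyA
        exact ⟨ψ y, (hψP y A hA).mp hyA, hφψ y⟩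
    refine ⟨φ, hbij, ?_, ?_, ?_⟩
    · ext A'
      constructor
      · rintro ⟨A, hA, rfl⟩
        rw [himg A hA]; exact hΦ.1.1 hA
      · intro hA'
        obtain ⟨A, hA, rfl⟩ := hΦ.1.2.2 hA'
        exact ⟨A, hA, himg A hA⟩
    · intro A hA
      rw [himg A hA, hΦ.2.2.2 A hA]
    · funext x
      refine hextY _ _ fun A' hA' => ?_
      obtain ⟨A, hA, rfl⟩ := hΦ.1.2.2 hA'
      have hTA : T ⁻¹' A ∈ R := hT.2.2.1 A hA
      show φ (T x) ∈ Φ A ↔ S (φ x) ∈ Φ A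
      rw [← hφP (T x) A hA]
      have : (x ∈ T ⁻¹' A ↔ φ x ∈ Φ (T ⁻¹' A)) := hφP x _ hTA
      rw [hΦT A hA] at this
      exact this
  · rintro ⟨φ, hbij, himgR, hmeas, hcomm⟩
    have hinj := hbij.1
    refine ⟨Set.image φ, ⟨⟨?_, ?_, ?_⟩, ?_, ?_, hmeas⟩, ?_⟩
    · intro A hA
      rw [← himgR]; exact ⟨A, hA, rfl⟩
    · intro A _ B _ h
      exact Set.image_injective.mpr hinj h
    · rw [Set.SurjOn, himgR]
    · intro A _ B _
      exact Set.image_union φ A B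
    · intro A _
      rw [Set.image_diff hinj, Set.image_univ, Set.range_eq_univ.mpr hbij.2]
    · intro A hA
      ext y
      obtain ⟨x, rfl⟩ := hbij.2 y
      have hx : φ (T x) = S (φ x) := congrFun hcomm x
      constructor
      · intro h
        have : x ∈ T ⁻¹' A := hinj.mem_set_image.mp h
        simp only [Set.mem_preimage, ← hx]
        exact ⟨T x, this, rfl⟩
      · intro h
        simp only [Set.mem_preimage, ← hx] at h
        obtain ⟨x', hx'A, hx'e⟩ := h
        have : T x = x' := hinj hx'e.symm
        exact ⟨x, by rw [Set.mem_preimage, this]; exact hx'A, rfl⟩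
end
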